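/- arXiv:1207.7333 — 4 statements merged into one kernel-verified Lean document; each statement's English description precedes it below -/
import Mathlib

section
/- With φ as above and ζ_a = (⟨i c₁ a, a⟩, ..., ⟨i cₙ a, a⟩, |a|²) ∈ ℝ^{n,1}, and X(x) = (2x/(1-|x|²), (1+|x|²)/(1-|x|²)) the hyperboloid position vector, the identity |φ(x)|² = -2 X(x)·ζ_a holds, where · is the Lorentz inner product u·v = Σⱼ uⱼvⱼ - u₀v₀ (with last coordinates the time components). -/
open ComplexConjugate Matrix

/-- with φ(x) = √(2/(1-|x|²))(a - i c(x)a),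
ζ_a = (⟨i c₁ a, a⟩, ..., ⟨i cₙ a, a⟩, |a|²) and X(x) the hyperboloid position vector
(2x/(1-|x|²), (1+|x|²)/(1-|x|²)), one has |φ(x)|² = -2 X(x)·ζ_a where
u·v = Σⱼ uⱼvⱼ - u₀v₀ is the Lorentz inner product. -/
theorem stmt5 (n m : ℕ) (c : Fin n → Matrix (Fin (2 ^ m)) (Fin (2 ^ m)) ℂ)
    (hskew : ∀ j, (c j)ᴴ = -(c j))
    (hcl : ∀ j k, c j * c k + c k * c j =
      if j = k then (-2 : ℂ) • (1 : Matrix (Fin (2 ^ m)) (Fin (2 ^ m)) ℂ) else 0)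
    (a : Fin (2 ^ m) → ℂ) (x : EuclideanSpace ℝ (Fin n)) (hx : ‖x‖ < 1) :
    (∑ p, ‖(Real.sqrt (2 / (1 - ‖x‖ ^ 2)) : ℂ) *
        (a p - Complex.I * ((∑ j, (x j : ℂ) • c j).mulVec a p))‖ ^ 2) =
      -2 * ((∑ j, (2 * x j / (1 - ‖x‖ ^ 2)) *
              (∑ p, Complex.I * ((c j).mulVec a p) * conj (a p)).re)
        - (1 + ‖x‖ ^ 2) / (1 - ‖x‖ ^ 2) * ∑ p, ‖a p‖ ^ 2) := by
  set N : ℝ := ‖x‖ ^ 2 with hN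
  have hN1 : N < 1 := by
    have := pow_lt_one₀ (norm_nonneg x) hx (two_ne_zero)
    simpa [hN] using this
  have hNpos : (0:ℝ) < 1 - N := by linarith
  have hNne : (1:ℝ) - N ≠ 0 := ne_of_gt hNpos
  -- norm squared on EuclideanSpace
  have hnormx : N = ∑ j, x j ^ 2 := by
    rw [hN, EuclideanSpace.norm_eq, Real.sq_sqrt (Finset.sum_nonneg fun i _ => sq_nonneg _)]
    simp [sq_abs]
  set C : Matrix (Fin (2 ^ m)) (Fin (2 ^ m)) ℂ := ∑ j, (x j : ℂ) • c j with hC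
  -- C squared
  have hCsq : C * C = (-(N:ℝ) : ℂ) • 1 := by
    have h1 : C * C = ∑ j, ∑ k, ((x j : ℂ) * (x k : ℂ)) • (c j * c k) := by
      rw [hC, Finset.sum_mul_sum]
      refine Finset.sum_congr rfl fun j _ => Finset.sum_congr rfl fun k _ => ?_
      rw [Matrix.smul_mul, Matrix.mul_smul, smul_smul]
    have h2 : C * C = ∑ j, ∑ k, ((x j : ℂ) * (x k : ℂ)) • (c k * c j) := by
      rw [h1, Finset.sum_comm]
      refine Finset.sum_congr rfl fun j _ => Finset.sum_congr rfl fun k _ => ?_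
      rw [mul_comm ((x j : ℂ))]
    have h3 : (2:ℂ) • (C * C) = ∑ j, ∑ k, ((x j : ℂ) * (x k : ℂ)) •
        (if j = k then (-2 : ℂ) • (1 : Matrix (Fin (2 ^ m)) (Fin (2 ^ m)) ℂ) else 0) := by
      have : (2:ℂ) • (C * C) = (C*C) + (C*C) := by rw [two_smul]
      rw [this]
      nth_rewrite 1 [h1]
      nth_rewrite 1 [h2]
      rw [← Finset.sum_add_distrib]
      refine Finset.sum_congr rfl fun j _ => ?_
      rw [← Finset.sum_add_distrib]
      refine Finset.sum_congr rfl fun k _ => ?_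
      rw [← smul_add, ← hcl j k, add_comm (c j * c k)]
    have h4 : (2:ℂ) • (C * C) = ((-2 * N : ℝ) : ℂ) • 1 := by
      rw [h3]
      simp only [smul_ite, smul_zero, Finset.sum_ite_eq, Finset.mem_univ, if_true, smul_smul]
      rw [← Finset.sum_smul]
      congr 1
      rw [hnormx]
      push_cast
      rw [Finset.mul_sum]
      refine Finset.sum_congr rfl fun j _ => ?_
      ring
    have := h4
    rw [show ((-2 * N : ℝ) : ℂ) = (2:ℂ) * ((-(N:ℝ)) : ℂ) by push_cast; ring,
      mul_smul] at this
    exact smul_right_injective _ (two_ne_zero) this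
  -- conj transpose
  have hCH : Cᴴ = -C := by
    rw [hC, Matrix.conjTranspose_sum]
    rw [← Finset.sum_neg_distrib]
    refine Finset.sum_congr rfl fun j _ => ?_
    rw [Matrix.conjTranspose_smul, hskew j]
    simp [Complex.conj_ofReal]
  -- sum of normSq of C *ᵥ a
  have hkey : (∑ p, Complex.normSq ((C *ᵥ a) p)) = N * ∑ p, Complex.normSq (a p) := by
    have hc1 : ((∑ p, Complex.normSq ((C *ᵥ a) p) : ℝ) : ℂ) = star (C *ᵥ a) ⬝ᵥ (C *ᵥ a) := by
      rw [dotProduct]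
      push_cast
      refine Finset.sum_congr rfl fun p _ => ?_
      rw [Pi.star_apply, Complex.star_def, ← Complex.normSq_eq_conj_mul_self]
    have hc2 : star (C *ᵥ a) ⬝ᵥ (C *ᵥ a) = ((N:ℝ):ℂ) * (star a ⬝ᵥ a) := by
      rw [Matrix.star_mulVec, Matrix.dotProduct_mulVec, Matrix.vecMul_vecMul, hCH,
        Matrix.neg_mul, hCsq]
      simp only [neg_smul, neg_neg]
      simp [Matrix.vecMul, dotProduct, Matrix.one_apply, Finset.mul_sum, mul_ite,
        Finset.sum_ite_eq, Finset.sum_ite_eq', mul_comm, mul_assoc, mul_left_comm]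
      rw [Finset.sum_mul]
      exact Finset.sum_congr rfl fun p _ => by ring
    have hc3 : ((∑ p, Complex.normSq (a p) : ℝ) : ℂ) = star a ⬝ᵥ a := by
      rw [dotProduct]
      push_cast
      refine Finset.sum_congr rfl fun p _ => ?_
      rw [Pi.star_apply, Complex.star_def, ← Complex.normSq_eq_conj_mul_self]
    have : ((∑ p, Complex.normSq ((C *ᵥ a) p) : ℝ) : ℂ) = ((N * ∑ p, Complex.normSq (a p) : ℝ) : ℂ) := by
      rw [hc1, hc2, ← hc3]; push_cast; ring
    exact_mod_cast this
  -- scaling constant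
  have hs : (Real.sqrt (2 / (1 - N))) ^ 2 = 2 / (1 - N) :=
    Real.sq_sqrt (by positivity)
  -- expand each summand
  have hterm : ∀ p, ‖(Real.sqrt (2 / (1 - N)) : ℂ) * (a p - Complex.I * ((C *ᵥ a) p))‖ ^ 2
      = (2 / (1 - N)) * (Complex.normSq (a p) + Complex.normSq ((C *ᵥ a) p)
          - 2 * (Complex.I * (C *ᵥ a) p * conj (a p)).re) := by
    intro p
    rw [norm_mul, mul_pow, Complex.norm_real, Real.norm_eq_abs,
      abs_of_nonneg (Real.sqrt_nonneg _), hs]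
    congr 1
    rw [Complex.sq_norm, Complex.normSq_sub, Complex.normSq_mul,
      Complex.normSq_I, one_mul]
    congr 1
    simp [Complex.mul_re, Complex.conj_re, Complex.conj_im]
    ring
  have hsplit : (∑ p, ‖(Real.sqrt (2 / (1 - N)) : ℂ) * (a p - Complex.I * ((C *ᵥ a) p))‖ ^ 2)
      = (2 / (1 - N)) * ((∑ p, Complex.normSq (a p)) + (∑ p, Complex.normSq ((C *ᵥ a) p))
          - 2 * ∑ p, (Complex.I * (C *ᵥ a) p * conj (a p)).re) := by
    simp_rw [hterm]
    rw [← Finset.mul_sum]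
    congr 1
    rw [Finset.sum_sub_distrib, Finset.sum_add_distrib, Finset.mul_sum]
  -- cross term
  have hCv : ∀ p, (C *ᵥ a) p = ∑ j, (x j : ℂ) * ((c j) *ᵥ a) p := by
    intro p
    rw [hC]
    simp only [Matrix.mulVec, dotProduct, Matrix.sum_apply, Matrix.smul_apply,
      Finset.sum_mul, Finset.mul_sum, smul_eq_mul]
    rw [Finset.sum_comm]
    exact Finset.sum_congr rfl fun j _ => Finset.sum_congr rfl fun q _ => by ring
  have hcross : (∑ p, (Complex.I * (C *ᵥ a) p * conj (a p)).re)
      = ∑ j, x j * (∑ p, Complex.I * ((c j) *ᵥ a) p * conj (a p)).re := by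
    have h1 : ∀ p, (Complex.I * (C *ᵥ a) p * conj (a p)).re
        = ∑ j, x j * (Complex.I * ((c j) *ᵥ a) p * conj (a p)).re := by
      intro p
      rw [hCv p, Finset.mul_sum, Finset.sum_mul, Complex.re_sum]
      refine Finset.sum_congr rfl fun j _ => ?_
      rw [show Complex.I * ((x j : ℂ) * ((c j) *ᵥ a) p) * conj (a p)
          = (x j : ℂ) * (Complex.I * ((c j) *ᵥ a) p * conj (a p)) by ring,
        Complex.re_ofReal_mul]
    simp_rw [h1]
    rw [Finset.sum_comm]
    refine Finset.sum_congr rfl fun j _ => ?_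
    rw [Complex.re_sum, Finset.mul_sum]
  -- norms vs normSq
  have hA : (∑ p, ‖a p‖ ^ 2) = ∑ p, Complex.normSq (a p) :=
    Finset.sum_congr rfl fun p _ => by rw [Complex.sq_norm]
  rw [hsplit, hkey, hcross, hA]
  rw [show (∑ j, (2 * x j / (1 - N)) * (∑ p, Complex.I * ((c j) *ᵥ a) p * conj (a p)).re)
      = (2 / (1 - N)) * ∑ j, x j * (∑ p, Complex.I * ((c j) *ᵥ a) p * conj (a p)).re by
    rw [Finset.mul_sum]; exact Finset.sum_congr rfl fun j _ => by ring]
  field_simp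
  ring
end

section
/- Suppose {cⱼ}ⱼ₌₁^{2m-1} are Clifford matrices on ℂ^{2^{m-1}} such that for every y ∈ S^{2m-2} there is a unit b ∈ ℂ^{2^{m-1}} with yⱼ = ⟨i cⱼ b, b⟩ for all j, and define on ℂ^{2^m} = ℂ² ⊗ ℂ^{2^{m-1}} the matrices dⱼ = I ⊗ cⱼ for j ≤ 2m-2, d_{2m-1} = -i g₁ ⊗ c_{2m-1}, d_{2m} = -i g₂ ⊗ c_{2m-1}, d_{2m+1} = T ⊗ c_{2m-1}. Then for every X ∈ S^{2m} there is a unit vector v ∈ ℂ^{2^m} with Xⱼ = ⟨i dⱼ v, v⟩ for all j = 1, ..., 2m+1. -/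
open ComplexConjugate Matrix Kronecker


lemma real_param (r X1 X2 X3 : ℝ) (hr : 0 ≤ r) (hsq : r^2 = X1^2 + X2^2 + X3^2) :
    ∃ α β γ : ℝ, α^2+β^2+γ^2 = 1 ∧ r*(α^2-β^2-γ^2) = X1 ∧ 2*r*α*β = X2 ∧ 2*r*α*γ = X3 := by
  rcases eq_or_lt_of_le hr with h0 | hrpos
  · have h1 : X1 = 0 := by nlinarith [sq_nonneg X1, sq_nonneg X2, sq_nonneg X3]
    have h2 : X2 = 0 := by nlinarith [sq_nonneg X1, sq_nonneg X2, sq_nonneg X3]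
    have h3 : X3 = 0 := by nlinarith [sq_nonneg X1, sq_nonneg X2, sq_nonneg X3]
    exact ⟨1, 0, 0, by ring, by rw [h1, ← h0]; ring, by rw [h2, ← h0]; ring,
      by rw [h3, ← h0]; ring⟩
  · have hs : 0 ≤ r + X1 := by nlinarith [sq_nonneg X2, sq_nonneg X3, sq_nonneg (r - X1)]
    rcases eq_or_lt_of_le hs with hs0 | hspos
    · have h2 : X2 = 0 := by nlinarith [sq_nonneg X2, sq_nonneg X3]
      have h3 : X3 = 0 := by nlinarith [sq_nonneg X2, sq_nonneg X3]
      exact ⟨0, 1, 0, by ring, by rw [show X1 = -r by linarith]; ring,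
        by rw [h2]; ring, by rw [h3]; ring⟩
    · set α := Real.sqrt ((r + X1) / (2*r)) with hα
      have hαsq : α^2 = (r + X1) / (2*r) := Real.sq_sqrt (by positivity)
      have hαpos : 0 < α := Real.sqrt_pos.mpr (by positivity)
      refine ⟨α, X2 / (2*r*α), X3 / (2*r*α), ?_, ?_, ?_, ?_⟩
      · have h4 : α^2 * (2*r) = r + X1 := by rw [hαsq]; exact div_mul_cancel₀ _ (by positivity)
        field_simp
        nlinarith [h4, sq_nonneg α]
      · have h4 : α^2 * (2*r) = r + X1 := by rw [hαsq]; exact div_mul_cancel₀ _ (by positivity)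
        field_simp
        linear_combination (2*r*α^2 + r - X1) * h4 + hsq
      · field_simp
      · field_simp

lemma sum_kron' {N : ℕ} (M : Matrix (Fin 2) (Fin 2) ℂ) (c : Matrix (Fin N) (Fin N) ℂ)
    (a : Fin 2 → ℂ) (b : Fin N → ℂ) (v : Fin 2 × Fin N → ℂ)
    (hv : ∀ p, v p = a p.1 * b p.2) :
    (∑ p : Fin 2 × Fin N, Complex.I * ((M ⊗ₖ c).mulVec v) p * conj (v p))
      = (∑ i, M.mulVec a i * conj (a i)) * ∑ q, Complex.I * (c.mulVec b q) * conj (b q) := by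
  have hveq : v = fun q => a q.1 * b q.2 := funext hv
  subst hveq
  rw [Finset.sum_mul_sum, Fintype.sum_prod_type]
  refine Finset.sum_congr rfl fun i _ => Finset.sum_congr rfl fun q _ => ?_
  have h : ((M ⊗ₖ c).mulVec (fun q => a q.1 * b q.2)) (i, q) = M.mulVec a i * c.mulVec b q := by
    simp only [Matrix.mulVec, dotProduct, Fintype.sum_prod_type, Matrix.kroneckerMap_apply]
    rw [Finset.sum_mul_sum]
    exact Finset.sum_congr rfl fun j _ => Finset.sum_congr rfl fun p _ => by ring
  rw [h, _root_.map_mul]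
  ring

lemma norm_split' {N : ℕ} (a : Fin 2 → ℂ) (b : Fin N → ℂ) (v : Fin 2 × Fin N → ℂ)
    (hv : ∀ p, v p = a p.1 * b p.2) :
    ∑ p : Fin 2 × Fin N, ‖v p‖^2 = (∑ i, ‖a i‖^2) * ∑ q, ‖b q‖^2 := by
  have hveq : v = fun q => a q.1 * b q.2 := funext hv
  subst hveq
  rw [Finset.sum_mul_sum, Fintype.sum_prod_type]
  exact Finset.sum_congr rfl fun i _ => Finset.sum_congr rfl fun q _ => by
    rw [norm_mul, mul_pow]

/-- the odd-dimensional induction step. If every y ∈ S^{2m-2} is realized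
as (⟨i cⱼ b, b⟩)ⱼ for some unit b ∈ ℂ^{2^{m-1}}, and dⱼ are defined on ℂ² ⊗ ℂ^{2^{m-1}}
by dⱼ = I ⊗ cⱼ (j ≤ 2m-2), d_{2m-1} = -i g₁ ⊗ c_{2m-1}, d_{2m} = -i g₂ ⊗ c_{2m-1},
d_{2m+1} = T ⊗ c_{2m-1}, then every X ∈ S^{2m} is realized as (⟨i dⱼ v, v⟩)ⱼ
for some unit v ∈ ℂ^{2^m}. -/
theorem stmt6 (m : ℕ) (hm : 1 ≤ m)
    (c : ℕ → Matrix (Fin (2 ^ (m - 1))) (Fin (2 ^ (m - 1))) ℂ)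
    (d : ℕ → Matrix (Fin 2 × Fin (2 ^ (m - 1))) (Fin 2 × Fin (2 ^ (m - 1))) ℂ)
    (hsurj : ∀ y : ℕ → ℝ, (∑ j ∈ Finset.Icc 1 (2 * m - 1), (y j) ^ 2) = 1 →
      ∃ b : Fin (2 ^ (m - 1)) → ℂ, (∑ p, ‖b p‖ ^ 2) = 1 ∧
        ∀ j ∈ Finset.Icc 1 (2 * m - 1),
          (y j : ℂ) = ∑ p, Complex.I * ((c j).mulVec b p) * conj (b p))
    (hdlow : ∀ j, 1 ≤ j → j ≤ 2 * m - 2 →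
      d j = (1 : Matrix (Fin 2) (Fin 2) ℂ) ⊗ₖ c j)
    (hd1 : d (2 * m - 1) =
      ((-Complex.I) • (!![Complex.I, 0; 0, -Complex.I] : Matrix (Fin 2) (Fin 2) ℂ)) ⊗ₖ
        c (2 * m - 1))
    (hd2 : d (2 * m) =
      ((-Complex.I) • (!![0, Complex.I; Complex.I, 0] : Matrix (Fin 2) (Fin 2) ℂ)) ⊗ₖ
        c (2 * m - 1))
    (hd3 : d (2 * m + 1) =
      (!![0, -Complex.I; Complex.I, 0] : Matrix (Fin 2) (Fin 2) ℂ) ⊗ₖ c (2 * m - 1)) :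
    ∀ X : ℕ → ℝ, (∑ j ∈ Finset.Icc 1 (2 * m + 1), (X j) ^ 2) = 1 →
      ∃ v : Fin 2 × Fin (2 ^ (m - 1)) → ℂ, (∑ p, ‖v p‖ ^ 2) = 1 ∧
        ∀ j ∈ Finset.Icc 1 (2 * m + 1),
          (X j : ℂ) = ∑ p, Complex.I * ((d j).mulVec v p) * conj (v p) := by
  intro X hX
  obtain ⟨r, hr0, hrsq⟩ : ∃ r : ℝ, 0 ≤ r ∧
      r^2 = X (2*m-1)^2 + X (2*m)^2 + X (2*m+1)^2 :=
    ⟨Real.sqrt _, Real.sqrt_nonneg _, Real.sq_sqrt (by positivity)⟩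
  have hsum3 : ∀ f : ℕ → ℝ, ∑ j ∈ Finset.Icc 1 (2*m+1), f j
      = (∑ j ∈ Finset.Icc 1 (2*m-2), f j) + f (2*m-1) + f (2*m) + f (2*m+1) := by
    intro f
    have h1 : Finset.Icc 1 (2*m+1)
        = Finset.Icc 1 (2*m-2) ∪ {2*m-1, 2*m, 2*m+1} := by
      ext j
      simp only [Finset.mem_Icc, Finset.mem_union, Finset.mem_insert, Finset.mem_singleton]
      omega
    have hdisj : Disjoint (Finset.Icc 1 (2*m-2)) ({2*m-1, 2*m, 2*m+1} : Finset ℕ) := by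
      simp only [Finset.disjoint_left, Finset.mem_Icc, Finset.mem_insert, Finset.mem_singleton]
      omega
    rw [h1, Finset.sum_union hdisj,
      Finset.sum_insert (by simp only [Finset.mem_insert, Finset.mem_singleton]; omega),
      Finset.sum_insert (by simp only [Finset.mem_singleton]; omega),
      Finset.sum_singleton]
    ring
  have hsum2 : ∀ f : ℕ → ℝ, ∑ j ∈ Finset.Icc 1 (2*m-1), f j
      = (∑ j ∈ Finset.Icc 1 (2*m-2), f j) + f (2*m-1) := by
    intro f
    have h1 : Finset.Icc 1 (2*m-1) = Finset.Icc 1 (2*m-2) ∪ {2*m-1} := by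
      ext j
      simp only [Finset.mem_Icc, Finset.mem_union, Finset.mem_singleton]
      omega
    have hdisj : Disjoint (Finset.Icc 1 (2*m-2)) ({2*m-1} : Finset ℕ) := by
      simp only [Finset.disjoint_left, Finset.mem_Icc, Finset.mem_singleton]
      omega
    rw [h1, Finset.sum_union hdisj, Finset.sum_singleton]
  have hy : ∑ j ∈ Finset.Icc 1 (2*m-1), (if j = 2*m-1 then r else X j) ^ 2 = 1 := by
    rw [hsum2, if_pos rfl]
    have hyy : ∀ j ∈ Finset.Icc 1 (2*m-2),
        (if j = 2*m-1 then r else X j) ^ 2 = X j ^ 2 := by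
      intro j hj
      simp only [Finset.mem_Icc] at hj
      rw [if_neg (by omega)]
    rw [Finset.sum_congr rfl hyy]
    rw [hsum3 (fun j => X j ^ 2)] at hX
    linarith [hrsq]
  obtain ⟨b, hb1, hb2⟩ := hsurj (fun j => if j = 2*m-1 then r else X j) hy
  have hb2' : ∀ j ∈ Finset.Icc 1 (2*m-1),
      ((if j = 2*m-1 then r else X j : ℝ) : ℂ)
        = ∑ p, Complex.I * ((c j).mulVec b p) * conj (b p) := hb2
  have hΦr : ((r:ℝ):ℂ) = ∑ p, Complex.I * ((c (2*m-1)).mulVec b p) * conj (b p) := by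
    have h := hb2' (2*m-1) (by simp only [Finset.mem_Icc]; omega)
    rwa [if_pos rfl] at h
  obtain ⟨α, β, γ, hn, h1, h2, h3⟩ := real_param r (X (2*m-1)) (X (2*m)) (X (2*m+1)) hr0 hrsq
  set a : Fin 2 → ℂ := ![(α:ℂ), (β:ℂ) + (γ:ℂ)*Complex.I] with hadef
  have hSid : (∑ i, (1 : Matrix (Fin 2) (Fin 2) ℂ).mulVec a i * conj (a i))
      = ((α^2+β^2+γ^2 : ℝ) : ℂ) := by
    simp [hadef, Fin.sum_univ_two, Matrix.one_mulVec, map_add, _root_.map_mul,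
      Complex.conj_ofReal, Complex.conj_I]
    ring_nf
    linear_combination (-(γ:ℂ)^2) * Complex.I_sq
  have hSg1 : (∑ i, (((-Complex.I) • (!![Complex.I, 0; 0, -Complex.I]
        : Matrix (Fin 2) (Fin 2) ℂ)).mulVec a i) * conj (a i))
      = ((α^2-β^2-γ^2 : ℝ) : ℂ) := by
    simp [hadef, Fin.sum_univ_two, Matrix.mulVec, dotProduct, map_add, _root_.map_mul,
      Complex.conj_ofReal, Complex.conj_I]
    linear_combination ((γ:ℂ)^2) * Complex.I_sq
  have hSg2 : (∑ i, (((-Complex.I) • (!![0, Complex.I; Complex.I, 0]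
        : Matrix (Fin 2) (Fin 2) ℂ)).mulVec a i) * conj (a i))
      = ((2*α*β : ℝ) : ℂ) := by
    simp [hadef, Fin.sum_univ_two, Matrix.mulVec, dotProduct, map_add, _root_.map_mul,
      Complex.conj_ofReal, Complex.conj_I]
    ring
  have hST : (∑ i, ((!![0, -Complex.I; Complex.I, 0]
        : Matrix (Fin 2) (Fin 2) ℂ).mulVec a i) * conj (a i))
      = ((2*α*γ : ℝ) : ℂ) := by
    simp [hadef, Fin.sum_univ_two, Matrix.mulVec, dotProduct, map_add, _root_.map_mul,
      Complex.conj_ofReal, Complex.conj_I]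
    linear_combination (-2*(α:ℂ)*γ) * Complex.I_sq
  refine ⟨fun p => a p.1 * b p.2, ?_, ?_⟩
  · rw [norm_split' a b _ (fun _ => rfl), hb1, mul_one]
    have : ∑ i, ‖a i‖^2 = α^2 + β^2 + γ^2 := by
      simp [hadef, Fin.sum_univ_two, Complex.sq_norm,
        Complex.normSq_add_mul_I]
      ring
    rw [this, hn]
  · intro j hj
    simp only [Finset.mem_Icc] at hj
    have hcase : (1 ≤ j ∧ j ≤ 2*m-2) ∨ j = 2*m-1 ∨ j = 2*m ∨ j = 2*m+1 := by omega
    rcases hcase with ⟨hj1, hj2⟩ | rfl | rfl | rfl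
    · rw [hdlow j hj1 hj2, sum_kron' _ _ a b _ (fun _ => rfl), hSid, hn]
      rw [Complex.ofReal_one, one_mul]
      have h := hb2' j (by simp only [Finset.mem_Icc]; omega)
      rw [if_neg (by omega)] at h
      exact h
    · rw [hd1, sum_kron' _ _ a b _ (fun _ => rfl), hSg1, ← hΦr, ← Complex.ofReal_mul]
      norm_cast
      linarith [h1]
    · rw [hd2, sum_kron' _ _ a b _ (fun _ => rfl), hSg2, ← hΦr, ← Complex.ofReal_mul]
      norm_cast
      linarith [h2]
    · rw [hd3, sum_kron' _ _ a b _ (fun _ => rfl), hST, ← hΦr, ← Complex.ofReal_mul]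
      norm_cast
      linarith [h3]
end

section
/- For every future-directed null vector ζ ∈ ℝ^{n,1} (n ≥ 2), there exists a ∈ ℂ^{2^m}, m = ⌊n/2⌋, such that ζ = ζ_a := Σⱼ₌₁ⁿ ⟨i cⱼ a, a⟩ eⱼ + |a|² e₀, where cⱼ are the standard Clifford matrices on ℂ^{2^m}. -/
open ComplexConjugate Matrix

/-- every future-directed null vector ζ = (ζ₁,...,ζₙ,ζ₀) ∈ ℝ^{n,1}
(n ≥ 2) equals ζ_a = Σⱼ ⟨i cⱼ a, a⟩ eⱼ + |a|² e₀ for some a ∈ ℂ^{2^m}, m = ⌊n/2⌋,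
where the cⱼ are (skew-Hermitian) Clifford matrices on ℂ^{2^m}. -/
theorem stmt7 (n : ℕ) (hn : 2 ≤ n)
    (c : Fin n → Matrix (Fin (2 ^ (n / 2))) (Fin (2 ^ (n / 2))) ℂ)
    (hskew : ∀ j, (c j)ᴴ = -(c j))
    (hcl : ∀ j k, c j * c k + c k * c j =
      if j = k then (-2 : ℂ) • (1 : Matrix (Fin (2 ^ (n / 2))) (Fin (2 ^ (n / 2))) ℂ) else 0)
    (ζ : Fin n → ℝ) (ζ₀ : ℝ) (hnull : ∑ j, (ζ j) ^ 2 = ζ₀ ^ 2) (hfut : 0 < ζ₀) :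
    ∃ a : Fin (2 ^ (n / 2)) → ℂ,
      (∀ j, (ζ j : ℂ) = ∑ p, Complex.I * ((c j).mulVec a p) * conj (a p)) ∧
      ζ₀ = ∑ p, ‖a p‖ ^ 2 := by
  classical
  have hz0 : (ζ₀ : ℂ) ≠ 0 := by exact_mod_cast hfut.ne'
  -- the Hermitian matrices A j = i • c j
  set A : Fin n → Matrix (Fin (2 ^ (n / 2))) (Fin (2 ^ (n / 2))) ℂ :=
    fun j => Complex.I • c j with hA
  -- c k * c k = -1
  have hcsq : ∀ k, c k * c k = -1 := by
    intro k
    have h := hcl k k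
    rw [if_pos rfl] at h
    have h2 : (2 : ℂ) • (c k * c k) = (2 : ℂ) • (-1 :
        Matrix (Fin (2 ^ (n / 2))) (Fin (2 ^ (n / 2))) ℂ) := by
      rw [two_smul, h, neg_smul, smul_neg]
    exact smul_right_injective _ (two_ne_zero) h2
  -- anticommutation for j ≠ k
  have hanti : ∀ j k, j ≠ k → c j * c k = -(c k * c j) := by
    intro j k hjk
    have h := hcl j k
    rw [if_neg hjk] at h
    exact eq_neg_of_add_eq_zero_left h
  -- traces vanish
  have htr : ∀ j, (c j).trace = 0 := by
    intro j
    haveI : Nontrivial (Fin n) := ⟨⟨⟨0, by omega⟩, ⟨1, by omega⟩, by simp [Fin.ext_iff]⟩⟩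
    obtain ⟨k, hk⟩ := exists_ne j
    have h1 : c k * (c j * c k) = c j := by
      rw [← mul_assoc, hanti k j hk, neg_mul, mul_assoc, hcsq, mul_neg_one, neg_neg]
    have h2 : ((c j * c k) * c k).trace = -(c j).trace := by
      rw [mul_assoc, hcsq, mul_neg_one, trace_neg]
    have h3 := trace_mul_comm (c k) (c j * c k)
    rw [h1, h2] at h3
    have h4 : (2 : ℂ) * (c j).trace = 0 := by linear_combination h3
    exact (mul_eq_zero.mp h4).resolve_left two_ne_zero
  -- Hermitian property of A j
  have hAherm : ∀ j, (A j)ᴴ = A j := by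
    intro j
    rw [hA]
    simp only [Matrix.conjTranspose_smul, hskew, Complex.star_def, Complex.conj_I,
      neg_smul, smul_neg, neg_neg]
  -- anticommutation of the A's
  have hAA : ∀ j k, A j * A k + A k * A j =
      if j = k then (2 : ℂ) • (1 : Matrix (Fin (2 ^ (n / 2))) (Fin (2 ^ (n / 2))) ℂ) else 0 := by
    intro j k
    have h := hcl j k
    rw [hA]
    simp only [Matrix.smul_mul, Matrix.mul_smul, smul_smul, Complex.I_mul_I]
    rw [← smul_add, h]
    split_ifs with hjk
    · rw [smul_smul]; norm_num
    · rw [smul_zero]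
  -- the matrix M = Σ ζ j • A j
  set M : Matrix (Fin (2 ^ (n / 2))) (Fin (2 ^ (n / 2))) ℂ :=
    ∑ j, (ζ j : ℂ) • A j with hM
  -- M is Hermitian
  have hMherm : Mᴴ = M := by
    rw [hM, Matrix.conjTranspose_sum]
    refine Finset.sum_congr rfl fun j _ => ?_
    rw [Matrix.conjTranspose_smul, hAherm, Complex.star_def, Complex.conj_ofReal]
  -- trace of M is zero
  have hMtr : M.trace = 0 := by
    rw [hM, Matrix.trace_sum]
    refine Finset.sum_eq_zero fun j _ => ?_
    rw [Matrix.trace_smul, hA]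
    simp [Matrix.trace_smul, htr j]
  -- anticommutator of A j with M
  have hanticomm : ∀ j, A j * M + M * A j = (2 * (ζ j : ℂ)) • 1 := by
    intro j
    rw [hM, Finset.mul_sum, Finset.sum_mul, ← Finset.sum_add_distrib]
    have step : ∀ k ∈ Finset.univ, A j * ((ζ k : ℂ) • A k) + ((ζ k : ℂ) • A k) * A j
        = (ζ k : ℂ) • (A j * A k + A k * A j) := by
      intro k _
      rw [mul_smul_comm ((ζ k : ℂ)) (A j) (A k), smul_mul_assoc ((ζ k : ℂ)) (A k) (A j),
        smul_add]
    rw [Finset.sum_congr rfl step]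
    have step2 : ∀ k ∈ Finset.univ, (ζ k : ℂ) • (A j * A k + A k * A j)
        = if j = k then (2 * (ζ j : ℂ)) • (1 : Matrix (Fin (2 ^ (n / 2))) (Fin (2 ^ (n / 2))) ℂ) else 0 := by
      intro k _
      rw [hAA]
      split_ifs with hjk
      · subst hjk; rw [smul_smul]; ring_nf
      · rw [smul_zero]
    rw [Finset.sum_congr rfl step2, Finset.sum_ite_eq Finset.univ j
      (fun _ => (2 * (ζ j : ℂ)) • (1 : Matrix (Fin (2 ^ (n / 2))) (Fin (2 ^ (n / 2))) ℂ)),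
      if_pos (Finset.mem_univ j)]
  -- M * M = ζ₀² • 1
  have hM2 : M * M = ((ζ₀ : ℂ) ^ 2) • 1 := by
    have e1 : M * M = ∑ j, (ζ j : ℂ) • (A j * M) := by
      have e : M * M = (∑ j, (ζ j : ℂ) • A j) * M := by rw [← hM]
      rw [e, Finset.sum_mul]
      exact Finset.sum_congr rfl fun j _ => smul_mul_assoc ((ζ j : ℂ)) (A j) M
    have e2 : M * M = ∑ j, (ζ j : ℂ) • (M * A j) := by
      have e : M * M = M * ∑ j, (ζ j : ℂ) • A j := by rw [← hM]
      rw [e, Finset.mul_sum]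
      exact Finset.sum_congr rfl fun j _ => mul_smul_comm ((ζ j : ℂ)) M (A j)
    have h1 : M * M + M * M = ∑ j, (ζ j : ℂ) • (A j * M + M * A j) := by
      nth_rewrite 1 [e1]
      nth_rewrite 1 [e2]
      rw [← Finset.sum_add_distrib]
      exact Finset.sum_congr rfl fun j _ => (smul_add _ _ _).symm
    have h2 : ∑ j, (ζ j : ℂ) • (A j * M + M * A j) = ((2 : ℂ) * (ζ₀ : ℂ) ^ 2) • 1 := by
      rw [Finset.sum_congr rfl fun j _ => by rw [hanticomm j, smul_smul]]
      rw [← Finset.sum_smul]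
      congr 1
      have hc : ∑ j, (ζ j : ℂ) ^ 2 = (ζ₀ : ℂ) ^ 2 := by exact_mod_cast hnull
      calc ∑ j, (ζ j : ℂ) * (2 * (ζ j : ℂ)) = 2 * ∑ j, (ζ j : ℂ) ^ 2 := by
            rw [Finset.mul_sum]
            exact Finset.sum_congr rfl fun j _ => by ring
        _ = 2 * (ζ₀ : ℂ) ^ 2 := by rw [hc]
    have h3 : (2 : ℂ) • (M * M) = (2 : ℂ) • (((ζ₀ : ℂ) ^ 2) • 1) := by
      rw [two_smul, h1, h2, smul_smul]
    exact smul_right_injective _ (two_ne_zero) h3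
  -- M ≠ -ζ₀ • 1 (compare traces)
  have hMne : M ≠ (-(ζ₀ : ℂ)) • 1 := by
    intro h
    have ht : (0 : ℂ) = (-(ζ₀ : ℂ)) * (Fintype.card (Fin (2 ^ (n / 2))) : ℂ) := by
      rw [← hMtr, h, Matrix.trace_smul, Matrix.trace_one, smul_eq_mul]
    have hcard : ((Fintype.card (Fin (2 ^ (n / 2))) : ℕ) : ℂ) ≠ 0 := by
      simp [Fintype.card_fin]
    have : (-(ζ₀ : ℂ)) = 0 := by
      rcases mul_eq_zero.mp ht.symm with h' | h'
      · exact h'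
      · exact absurd h' hcard
    simp only [neg_eq_zero] at this
    exact hz0 this
  -- an eigenvector for eigenvalue ζ₀
  have hex : ∃ w, (M + (ζ₀ : ℂ) • 1).mulVec w ≠ 0 := by
    by_contra hno
    push_neg at hno
    apply hMne
    have hzero : M + (ζ₀ : ℂ) • 1 = 0 := by
      ext i k
      have h := congrFun (hno (Pi.single k 1)) i
      simpa [Matrix.mulVec_single] using h
    rw [eq_neg_of_add_eq_zero_left hzero, neg_smul]
  obtain ⟨w, hw⟩ := hex
  set v : Fin (2 ^ (n / 2)) → ℂ := (M + (ζ₀ : ℂ) • 1).mulVec w with hv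
  have hMv : M.mulVec v = (ζ₀ : ℂ) • v := by
    have key : M * (M + (ζ₀ : ℂ) • 1) = (ζ₀ : ℂ) • (M + (ζ₀ : ℂ) • 1) := by
      rw [mul_add, hM2, mul_smul_comm, mul_one, smul_add, smul_smul, sq]
      abel
    calc M.mulVec v = (M * (M + (ζ₀ : ℂ) • 1)).mulVec w := by
          rw [hv, Matrix.mulVec_mulVec]
      _ = ((ζ₀ : ℂ) • (M + (ζ₀ : ℂ) • 1)).mulVec w := by rw [key]
      _ = (ζ₀ : ℂ) • v := by rw [Matrix.smul_mulVec, hv]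
  have hvne : v ≠ 0 := hw
  set s : ℝ := ∑ p, ‖v p‖ ^ 2 with hs
  have hspos : 0 < s := by
    obtain ⟨p, hp⟩ : ∃ p, v p ≠ 0 := by
      by_contra h
      push_neg at h
      exact hvne (funext h)
    have hppos : 0 < ‖v p‖ ^ 2 := pow_pos (norm_pos_iff.mpr hp) 2
    exact Finset.sum_pos' (fun q _ => by positivity) ⟨p, Finset.mem_univ p, hppos⟩
  have hsne : (s : ℂ) ≠ 0 := by exact_mod_cast hspos.ne'
  have hsc : star v ⬝ᵥ v = (s : ℂ) := by
    rw [hs]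
    push_cast
    refine Finset.sum_congr rfl fun p _ => ?_
    rw [Pi.star_apply, Complex.star_def, mul_comm, Complex.mul_conj, Complex.normSq_eq_norm_sq]
    push_cast
    ring
  -- ⟨v, A j v⟩ = ζ j * s / ζ₀
  have hQ : ∀ j, star v ⬝ᵥ (A j).mulVec v = (ζ j : ℂ) * (s : ℂ) / (ζ₀ : ℂ) := by
    intro j
    set Q : ℂ := star v ⬝ᵥ (A j).mulVec v with hQdef
    have e1 : star v ⬝ᵥ (A j * M).mulVec v = (ζ₀ : ℂ) * (star v ⬝ᵥ (A j).mulVec v) := by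
      rw [← Matrix.mulVec_mulVec, hMv, Matrix.mulVec_smul, dotProduct_smul, smul_eq_mul]
    have hvm : star v ᵥ* M = (ζ₀ : ℂ) • star v := by
      have h := Matrix.star_mulVec M v
      rw [hMherm] at h
      rw [← h, hMv, star_smul, Complex.star_def, Complex.conj_ofReal]
    have e2 : star v ⬝ᵥ (M * A j).mulVec v = (ζ₀ : ℂ) * (star v ⬝ᵥ (A j).mulVec v) := by
      rw [← Matrix.mulVec_mulVec, Matrix.dotProduct_mulVec, hvm, smul_dotProduct,
        smul_eq_mul]
    have eadd : star v ⬝ᵥ (A j * M + M * A j).mulVec v = 2 * (ζ j : ℂ) * (s : ℂ) := by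
      rw [hanticomm j, Matrix.smul_mulVec, Matrix.one_mulVec, dotProduct_smul,
        smul_eq_mul, hsc]
    have eadd2 : star v ⬝ᵥ (A j * M + M * A j).mulVec v
        = 2 * (ζ₀ : ℂ) * (star v ⬝ᵥ (A j).mulVec v) := by
      rw [Matrix.add_mulVec, dotProduct_add, e1, e2]
      ring
    have key : 2 * (ζ₀ : ℂ) * (star v ⬝ᵥ (A j).mulVec v) = 2 * (ζ j : ℂ) * (s : ℂ) :=
      eadd2.symm.trans eadd
    rw [hQdef, eq_div_iff hz0]
    linear_combination (1/2 : ℂ) * key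
  -- rescale
  set r : ℝ := Real.sqrt (ζ₀ / s) with hr
  have hr2 : r ^ 2 = ζ₀ / s := Real.sq_sqrt (by positivity)
  refine ⟨fun p => (r : ℂ) * v p, ?_, ?_⟩
  · intro j
    have hterm : ∀ p, Complex.I * ((c j).mulVec (fun q => (r : ℂ) * v q) p)
        * conj ((r : ℂ) * v p)
        = ((r : ℂ) * (r : ℂ)) * (star v p * ((A j).mulVec v p)) := by
      intro p
      have h1 : (c j).mulVec (fun q => (r : ℂ) * v q) p = (r : ℂ) * ((c j).mulVec v p) := by
        have hfe : (fun q => (r : ℂ) * v q) = (r : ℂ) • v := by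
          funext q
          simp [Pi.smul_apply, smul_eq_mul]
        rw [hfe, Matrix.mulVec_smul, Pi.smul_apply, smul_eq_mul]
      have h2 : (A j).mulVec v p = Complex.I * ((c j).mulVec v p) := by
        rw [hA]
        rw [Matrix.smul_mulVec, Pi.smul_apply, smul_eq_mul]
      rw [h1, h2, Pi.star_apply, Complex.star_def]
      rw [show (starRingEnd ℂ) ((r : ℂ) * v p) = (r : ℂ) * (starRingEnd ℂ) (v p) from by
        rw [_root_.map_mul, Complex.conj_ofReal]]
      ring
    rw [Finset.sum_congr rfl fun p _ => hterm p, ← Finset.mul_sum]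
    have hdp : ∑ p, star v p * (A j).mulVec v p = star v ⬝ᵥ (A j).mulVec v := rfl
    rw [hdp, hQ j]
    have hrr : (r : ℂ) * (r : ℂ) = (ζ₀ : ℂ) / (s : ℂ) := by
      have h' : ((r ^ 2 : ℝ) : ℂ) = ((ζ₀ / s : ℝ) : ℂ) := by rw [hr2]
      push_cast at h'
      linear_combination h'
    rw [hrr]
    field_simp
  · have hterm : ∀ p, ‖(r : ℂ) * v p‖ ^ 2 = r ^ 2 * ‖v p‖ ^ 2 := by
      intro p
      rw [norm_mul, mul_pow, Complex.norm_real, Real.norm_eq_abs, sq_abs]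
    rw [Finset.sum_congr rfl fun p _ => hterm p, ← Finset.mul_sum, ← hs, hr2]
    field_simp
end

section
/- Let k, r, R₁ > 0 with r > R₁, let α = coth(kR₁) + μ and μ = (1/sinh(kR₁))·((sinh²(kR₂)/sinh²(kR₁)) - 1)^{1/2} with R₂ ≥ R₁. Suppose φ, r are differentiable functions of ρ with |φ| ≤ 1, ∂r/∂ρ > 0, and |∂φ/∂ρ| ≤ μ k ∂r/∂ρ. Then φ cosh(kr) ∂r/∂ρ + (1/k) sinh(kr) ∂φ/∂ρ - α sinh(kr) ∂r/∂ρ < 0. -/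
open Real

/-- with α = coth(kR₁) + μ, μ = (1/sinh(kR₁))·√(sinh²(kR₂)/sinh²(kR₁) - 1),
r > R₁ > 0, |φ| ≤ 1, ∂r/∂ρ > 0 and |∂φ/∂ρ| ≤ μk ∂r/∂ρ, one has
φ cosh(kr) ∂r/∂ρ + (1/k) sinh(kr) ∂φ/∂ρ - α sinh(kr) ∂r/∂ρ < 0. -/
theorem stmt11 (k R₁ R₂ r φ dr dφ : ℝ) (hk : 0 < k) (hR₁ : 0 < R₁) (hR₂ : R₁ ≤ R₂)
    (hr : R₁ < r) (hφ : |φ| ≤ 1) (hdr : 0 < dr)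
    (μ : ℝ) (hμ : μ = (1 / sinh (k * R₁)) * Real.sqrt (sinh (k * R₂) ^ 2 / sinh (k * R₁) ^ 2 - 1))
    (α : ℝ) (hα : α = cosh (k * R₁) / sinh (k * R₁) + μ)
    (hdφ : |dφ| ≤ μ * k * dr) :
    φ * cosh (k * r) * dr + (1 / k) * sinh (k * r) * dφ - α * sinh (k * r) * dr < 0 := by
  have hs1 : 0 < sinh (k * R₁) := Real.sinh_pos_iff.mpr (by positivity)
  have hsr : 0 < sinh (k * r) := Real.sinh_pos_iff.mpr (by nlinarith)
  have hcr : 0 < cosh (k * r) := Real.cosh_pos _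
  have hφ1 : φ ≤ 1 := (abs_le.mp hφ).2
  have hdφ1 : dφ ≤ μ * k * dr := le_trans (le_abs_self dφ) hdφ
  have hμ0 : 0 ≤ μ := by rw [hμ]; exact mul_nonneg (div_nonneg zero_le_one hs1.le) (Real.sqrt_nonneg _)
  have hk1 : (1 / k) * k = 1 := by field_simp
  have hneg : sinh (k * R₁ - k * r) < 0 := by
    rw [show k * R₁ - k * r = -(k * r - k * R₁) by ring, Real.sinh_neg]
    have : 0 < sinh (k * r - k * R₁) := Real.sinh_pos_iff.mpr (by nlinarith)
    linarith
  have hsub : sinh (k * R₁ - k * r) =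
      sinh (k * R₁) * cosh (k * r) - cosh (k * R₁) * sinh (k * r) := Real.sinh_sub _ _
  have key : cosh (k * r) - (cosh (k * R₁) / sinh (k * R₁)) * sinh (k * r) < 0 := by
    rw [div_mul_eq_mul_div, sub_div', div_neg_iff]
    right
    constructor
    · nlinarith
    · exact hs1
    · exact ne_of_gt hs1
  have h1 : φ * cosh (k * r) * dr ≤ cosh (k * r) * dr := by nlinarith [mul_nonneg (mul_nonneg (sub_nonneg.mpr hφ1) hcr.le) hdr.le]
  have h2 : (1 / k) * sinh (k * r) * dφ ≤ μ * sinh (k * r) * dr := by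
    have h3 : (1 / k) * sinh (k * r) * dφ ≤ (1 / k) * sinh (k * r) * (μ * k * dr) := by
      have : 0 < (1 / k) * sinh (k * r) := by positivity
      nlinarith
    calc (1 / k) * sinh (k * r) * dφ ≤ (1 / k) * sinh (k * r) * (μ * k * dr) := h3
      _ = ((1 / k) * k) * (μ * sinh (k * r) * dr) := by ring
      _ = μ * sinh (k * r) * dr := by rw [hk1]; ring
  rw [hα]
  nlinarith [mul_pos hdr (neg_pos.mpr key)]
end
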